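/- Let φ : ℝ → ℂ be continuously differentiable with φ and φ' integrable on ℝ. Then for every τ ∈ ℝ the limit lim_{γ→0⁺} ∫_ℝ φ(u)/(τ − iγ − u) du exists, the principal value PV ∫ φ(u)/(τ−u) du := lim_{ε→0⁺} ∫_{|u−τ|>ε} φ(u)/(τ − u) du exists, and lim_{γ→0⁺} ∫_ℝ φ(u)/(τ − iγ − u) du = PV ∫_ℝ φ(u)/(τ − u) du + iπ φ(τ). -/

import Mathlib

open MeasureTheory Set Filter Complex

lemma cancel_sym (τ : ℝ) (c : ℂ) {A : Set ℝ} (hAm : MeasurableSet A)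
    (hA : ∀ x : ℝ, (2*τ - x) ∈ A ↔ x ∈ A) :
    ∫ u in A, c / ((τ:ℂ) - u) = 0 := by
  have key : ∫ u in A, c / ((τ:ℂ) - u) = - ∫ u in A, c / ((τ:ℂ) - u) := by
    calc ∫ u in A, c / ((τ:ℂ) - u)
        = ∫ u, A.indicator (fun u : ℝ => c / ((τ:ℂ) - u)) u := (integral_indicator hAm).symm
      _ = ∫ x, A.indicator (fun u : ℝ => c / ((τ:ℂ) - u)) (2*τ - x) :=
          (integral_sub_left_eq_self _ volume (2*τ)).symm
      _ = ∫ x, - A.indicator (fun u : ℝ => c / ((τ:ℂ) - u)) x := by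
          congr 1; funext x
          by_cases hx : x ∈ A
          · rw [Set.indicator_of_mem ((hA x).2 hx), Set.indicator_of_mem hx]
            push_cast
            rw [show (τ:ℂ) - (2*τ - x) = -((τ:ℂ) - x) by ring, div_neg]
          · rw [Set.indicator_of_notMem (fun h => hx ((hA x).1 h)),
              Set.indicator_of_notMem hx, neg_zero]
      _ = - ∫ x, A.indicator (fun u : ℝ => c / ((τ:ℂ) - u)) x := integral_neg _
      _ = _ := by rw [integral_indicator hAm]
  exact CharZero.eq_neg_self_iff.mp key

theorem stmt7 (φ : ℝ → ℂ)
    (hC1 : ContDiff ℝ 1 φ)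
    (hint : Integrable φ)
    (hint' : Integrable (deriv φ)) :
    ∀ τ : ℝ, ∃ PV : ℂ,
      Filter.Tendsto (fun ε : ℝ => ∫ u in {u : ℝ | ε < |u - τ|}, φ u / ((τ : ℂ) - u))
        (nhdsWithin 0 (Set.Ioi 0)) (nhds PV) ∧
      Filter.Tendsto (fun γ : ℝ => ∫ u : ℝ, φ u / ((τ : ℂ) - Complex.I * γ - u))
        (nhdsWithin 0 (Set.Ioi 0))
        (nhds (PV + Real.pi * Complex.I * φ τ)) := by
  intro τ
  have hφc : Continuous φ := hC1.continuous
  have hτmem : τ ∈ Icc (τ-1) (τ+1) := by constructor <;> linarith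
  -- Lipschitz bound near τ
  obtain ⟨M0, hM0⟩ : ∃ C, ∀ x ∈ Icc (τ-1) (τ+1), ‖deriv φ x‖ ≤ C :=
    isCompact_Icc.exists_bound_of_continuousOn (hC1.continuous_deriv le_rfl).continuousOn
  set M : ℝ := max M0 0 with hMdef
  have hMnn : 0 ≤ M := le_max_right _ _
  have hLip : ∀ u ∈ Icc (τ-1) (τ+1), ‖φ u - φ τ‖ ≤ M * |u - τ| := by
    intro u hu
    have h := (convex_Icc (τ-1) (τ+1)).norm_image_sub_le_of_norm_deriv_le (C := M)
      (fun x _ => (hC1.differentiable one_ne_zero).differentiableAt)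
      (fun x hx => (hM0 x hx).trans (le_max_left _ _)) hτmem hu
    simpa [Real.norm_eq_abs] using h
  -- the set B
  set B : Set ℝ := Icc (τ-1) (τ+1) with hBdef
  have hBmem : ∀ u : ℝ, u ∈ B ↔ |u - τ| ≤ 1 := by
    intro u
    rw [hBdef, Set.mem_Icc, abs_le]
    constructor <;> rintro ⟨h1, h2⟩ <;> constructor <;> linarith
  have hBm : MeasurableSet B := measurableSet_Icc
  have hBfin : volume B < ⊤ := measure_Icc_lt_top
  -- norms of complex denominators
  have hnormc : ∀ u : ℝ, ‖(τ:ℂ) - u‖ = |u - τ| := by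
    intro u
    rw [show (τ:ℂ) - u = ((τ - u : ℝ) : ℂ) by push_cast; ring, Complex.norm_real,
      Real.norm_eq_abs, abs_sub_comm]
  have hdenim : ∀ (γ u : ℝ), ((τ:ℂ) - Complex.I * γ - u).im = -γ := by
    intro γ u
    simp [Complex.sub_im, Complex.mul_im]
  have hdenre : ∀ (γ u : ℝ), ((τ:ℂ) - Complex.I * γ - u).re = τ - u := by
    intro γ u
    simp [Complex.sub_re, Complex.mul_re]
  have hdennorm : ∀ (γ u : ℝ), |u - τ| ≤ ‖(τ:ℂ) - Complex.I * γ - u‖ := by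
    intro γ u
    have h := Complex.abs_re_le_norm ((τ:ℂ) - Complex.I * γ - u)
    rw [hdenre] at h
    calc |u - τ| = |τ - u| := abs_sub_comm _ _
      _ ≤ _ := h
  have hdennorm' : ∀ (γ u : ℝ), |γ| ≤ ‖(τ:ℂ) - Complex.I * γ - u‖ := by
    intro γ u
    have h := Complex.abs_im_le_norm ((τ:ℂ) - Complex.I * γ - u)
    rw [hdenim, abs_neg] at h
    exact h
  -- functions
  set f : ℝ → ℂ := fun u => φ u / ((τ:ℂ) - u) with hfdef
  set g : ℝ → ℂ := fun u => (φ u - φ τ) / ((τ:ℂ) - u) with hgdef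
  have hmden : Measurable fun u : ℝ => (τ:ℂ) - u :=
    (continuous_const.sub Complex.continuous_ofReal).measurable
  have hmf : Measurable f := (hφc.measurable).div hmden
  have hmg : Measurable g := ((hφc.measurable).sub measurable_const).div hmden
  have hfg : ∀ u : ℝ, f u = g u + φ τ / ((τ:ℂ) - u) := by
    intro u
    rw [hfdef, hgdef]
    simp only []
    rw [← add_div, sub_add_cancel]
  -- bound for g on B
  have hgbound : ∀ u ∈ B, ‖g u‖ ≤ M := by
    intro u hu
    by_cases h : u = τ
    · simp [hgdef, h, hMnn]
    · have hpos : 0 < |u - τ| := abs_pos.2 (sub_ne_zero.2 h)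
      rw [hgdef]
      simp only []
      rw [norm_div, hnormc, div_le_iff₀ hpos]
      exact hLip u hu
  -- integrability facts
  have hIobdd : ∀ (h : ℝ → ℂ) (C : ℝ) (s : Set ℝ), MeasurableSet s → s ⊆ B → Measurable h →
      (∀ u ∈ s, ‖h u‖ ≤ C) → IntegrableOn h s := by
    intro h C s hsm hsB hm hb
    refine Integrable.mono' (integrableOn_const ((measure_mono hsB).trans_lt hBfin).ne)
      hm.aestronglyMeasurable.restrict ((ae_restrict_iff' hsm).2 (ae_of_all _ hb))
  have hfS : IntegrableOn f Bᶜ := by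
    refine Integrable.mono' hint.norm.integrableOn hmf.aestronglyMeasurable.restrict
      ((ae_restrict_iff' hBm.compl).2 (ae_of_all _ fun u hu => ?_))
    have h1 : (1:ℝ) ≤ |u - τ| := by
      have := (hBmem u).not.1 hu; push_neg at this; linarith
    rw [hfdef]
    simp only []
    rw [norm_div, hnormc]
    exact div_le_self (norm_nonneg _) h1
  have hgB : IntegrableOn g B := hIobdd g M B hBm subset_rfl hmg hgbound
  -- bound for φ on B
  obtain ⟨Cφ, hCφ⟩ : ∃ C, ∀ x ∈ Icc (τ-1) (τ+1), ‖φ x‖ ≤ C :=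
    isCompact_Icc.exists_bound_of_continuousOn hφc.continuousOn
  have hCφnn : 0 ≤ Cφ := (norm_nonneg _).trans (hCφ τ hτmem)
  -- measurability of annuli
  have hA : ∀ ε : ℝ, MeasurableSet {u : ℝ | ε < |u - τ|} := by
    intro ε
    exact measurableSet_lt measurable_const ((measurable_id.sub_const τ).abs)
  -- PV value
  refine ⟨(∫ u in Bᶜ, f u) + ∫ u in B, g u, ?_, ?_⟩
  · -- first limit
    have key1 : ∀ ε ∈ Ioo (0:ℝ) 1,
        ∫ u in {u : ℝ | ε < |u - τ|}, f u
          = (∫ u in Bᶜ, f u) + ∫ u in ({u : ℝ | ε < |u - τ|} ∩ B), g u := by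
      intro ε hε
      set Aε : Set ℝ := {u : ℝ | ε < |u - τ|} ∩ B with hAεdef
      have hAεm : MeasurableSet Aε := (hA ε).inter hBm
      have hsets : {u : ℝ | ε < |u - τ|} = Bᶜ ∪ Aε := by
        rw [hAεdef]
        ext u
        simp only [Set.mem_union, Set.mem_inter_iff, Set.mem_compl_iff, Set.mem_setOf_eq, hBmem]
        constructor
        · intro h
          by_cases hb : |u - τ| ≤ 1
          · exact Or.inr ⟨h, hb⟩
          · exact Or.inl hb
        · rintro (h | ⟨h, _⟩)
          · push_neg at h; linarith [hε.2]
          · exact h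
      have hdisj : Disjoint Bᶜ Aε :=
        disjoint_compl_left.mono_right inter_subset_right
      have hfA : IntegrableOn f Aε := by
        refine hIobdd f (Cφ / ε) _ hAεm inter_subset_right hmf fun u hu => ?_
        rw [hfdef]
        simp only []
        rw [norm_div, hnormc]
        exact div_le_div₀ hCφnn (hCφ u hu.2) hε.1 hu.1.le
      rw [hsets, setIntegral_union hdisj hAεm hfS hfA]
      congr 1
      have hconstA : IntegrableOn (fun u : ℝ => φ τ / ((τ:ℂ) - u))
          Aε := by
        refine hIobdd _ (‖φ τ‖ / ε) _ hAεm inter_subset_right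
          (measurable_const.div hmden) fun u hu => ?_
        rw [norm_div, hnormc]
        exact div_le_div₀ (norm_nonneg _) le_rfl hε.1 hu.1.le
      have hgA : IntegrableOn g Aε := hgB.mono_set inter_subset_right
      calc ∫ u in Aε, f u
          = ∫ u in Aε, (g u + φ τ / ((τ:ℂ) - u)) :=
            setIntegral_congr_fun hAεm fun u _ => hfg u
        _ = (∫ u in Aε, g u)
            + ∫ u in Aε, φ τ / ((τ:ℂ) - u) :=
            integral_add hgA hconstA
        _ = ∫ u in Aε, g u := by
            rw [cancel_sym τ (φ τ) hAεm ?_, add_zero]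
            intro x
            have habs : |2*τ - x - τ| = |x - τ| := by
              rw [show 2*τ - x - τ = -(x - τ) by ring, abs_neg]
            simp only [hAεdef, Set.mem_inter_iff, Set.mem_setOf_eq, hBmem, habs]
    have ht1 : Tendsto (fun ε : ℝ => ∫ u in ({u : ℝ | ε < |u - τ|} ∩ B), g u)
        (nhdsWithin 0 (Set.Ioi 0)) (nhds (∫ u in B, g u)) := by
      have heq : ∀ ε : ℝ, ∫ u in ({u : ℝ | ε < |u - τ|} ∩ B), g u
          = ∫ u in B, ({u : ℝ | ε < |u - τ|}.indicator g) u := by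
        intro ε
        rw [setIntegral_indicator (hA ε), inter_comm]
      refine Tendsto.congr (fun ε => (heq ε).symm) ?_
      refine tendsto_integral_filter_of_dominated_convergence (fun _ => M)
        (Eventually.of_forall fun ε => (hmg.indicator (hA ε)).aestronglyMeasurable.restrict)
        (Eventually.of_forall fun ε => (ae_restrict_iff' hBm).2 (ae_of_all _ fun u hu =>
          (norm_indicator_le_norm_self g u).trans (hgbound u hu)))
        (integrableOn_const hBfin.ne) ?_
      have hne : ∀ᵐ u ∂(volume.restrict B), u ≠ τ := by
        refine ae_restrict_of_ae ?_
        rw [ae_iff]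
        convert Real.volume_singleton (a := τ) using 2
        ext u; simp
      refine hne.mono fun u hu => ?_
      have hpos : 0 < |u - τ| := abs_pos.2 (sub_ne_zero.2 hu)
      have hev : ∀ᶠ ε in nhdsWithin (0:ℝ) (Set.Ioi 0),
          ({u' : ℝ | ε < |u' - τ|}).indicator g u = g u := by
        filter_upwards [nhdsWithin_le_nhds (eventually_lt_nhds hpos)] with ε hε
        exact Set.indicator_of_mem (show u ∈ {u' : ℝ | ε < |u' - τ|} from hε) g
      exact Filter.Tendsto.congr' (hev.mono fun ε h => h.symm) tendsto_const_nhds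
    have hev1 : ∀ᶠ ε in nhdsWithin (0:ℝ) (Set.Ioi 0), ε ∈ Ioo (0:ℝ) 1 := by
      filter_upwards [Ioo_mem_nhdsGT_of_mem (Set.left_mem_Ico.2 one_pos)] with ε hε using hε
    refine Filter.Tendsto.congr' ?_ (tendsto_const_nhds.add ht1)
    filter_upwards [hev1] with ε hε using (key1 ε hε).symm
  · -- second limit
    have hmdenγ : ∀ γ : ℝ, Measurable fun u : ℝ => (τ:ℂ) - Complex.I * γ - u :=
      fun γ => (continuous_const.sub Complex.continuous_ofReal).measurable
    have hdne : ∀ (γ : ℝ), 0 < γ → ∀ (u : ℝ), (τ:ℂ) - Complex.I * γ - u ≠ 0 := by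
      intro γ hγ u h
      have h2 := hdenim γ u
      rw [h] at h2
      simp at h2
      linarith
    have hintγ : ∀ γ : ℝ, 0 < γ →
        Integrable (fun u : ℝ => φ u / ((τ:ℂ) - Complex.I * γ - u)) := by
      intro γ hγ
      refine Integrable.mono' (hint.norm.const_mul γ⁻¹)
        ((hφc.measurable.div (hmdenγ γ)).aestronglyMeasurable) (ae_of_all _ fun u => ?_)
      rw [norm_div, inv_mul_eq_div]
      refine div_le_div₀ (norm_nonneg _) le_rfl hγ ?_
      calc γ = |γ| := (abs_of_pos hγ).symm
        _ ≤ _ := hdennorm' γ u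
    -- far part
    have ht2 : Tendsto (fun γ : ℝ => ∫ u in Bᶜ, φ u / ((τ:ℂ) - Complex.I * γ - u))
        (nhdsWithin 0 (Set.Ioi 0)) (nhds (∫ u in Bᶜ, f u)) := by
      refine tendsto_integral_filter_of_dominated_convergence (fun u => ‖φ u‖)
        (Eventually.of_forall fun γ =>
          ((hφc.measurable.div (hmdenγ γ)).aestronglyMeasurable).restrict)
        (Eventually.of_forall fun γ => (ae_restrict_iff' hBm.compl).2 (ae_of_all _ fun u hu => ?_))
        hint.norm.integrableOn ?_
      · have h1 : (1:ℝ) ≤ |u - τ| := by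
          have := (hBmem u).not.1 hu; push_neg at this; linarith
        rw [norm_div]
        exact div_le_self (norm_nonneg _) (h1.trans (hdennorm γ u))
      · filter_upwards [ae_restrict_mem hBm.compl] with u hu
        have h1 : (1:ℝ) ≤ |u - τ| := by
          have := (hBmem u).not.1 hu; push_neg at this; linarith
        have hune : ((τ:ℂ) - u) ≠ 0 := by
          intro h
          have h0 : |u - τ| = 0 := by rw [← hnormc u, h, norm_zero]
          linarith
        have hcont : Tendsto (fun γ : ℝ => (τ:ℂ) - Complex.I * γ - u)
            (nhdsWithin 0 (Set.Ioi 0)) (nhds ((τ:ℂ) - u)) := by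
          have hcont' : Continuous fun γ : ℝ => (τ:ℂ) - Complex.I * γ - u :=
            (continuous_const.sub (continuous_const.mul Complex.continuous_ofReal)).sub
              continuous_const
          have h0 := (hcont'.tendsto 0).mono_left (nhdsWithin_le_nhds (s := Set.Ioi (0:ℝ)))
          simpa using h0
        exact Filter.Tendsto.div tendsto_const_nhds hcont hune
    -- near part: difference term
    have ht3 : Tendsto (fun γ : ℝ => ∫ u in B, (φ u - φ τ) / ((τ:ℂ) - Complex.I * γ - u))
        (nhdsWithin 0 (Set.Ioi 0)) (nhds (∫ u in B, g u)) := by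
      refine tendsto_integral_filter_of_dominated_convergence (fun _ => M)
        (Eventually.of_forall fun γ =>
          (((hφc.measurable.sub measurable_const).div (hmdenγ γ)).aestronglyMeasurable).restrict)
        (Eventually.of_forall fun γ => (ae_restrict_iff' hBm).2 (ae_of_all _ fun u hu => ?_))
        (integrableOn_const hBfin.ne) ?_
      · by_cases h : u = τ
        · simp [h, hMnn]
        · have hpos : 0 < |u - τ| := abs_pos.2 (sub_ne_zero.2 h)
          have hdpos : 0 < ‖(τ:ℂ) - Complex.I * γ - u‖ := lt_of_lt_of_le hpos (hdennorm γ u)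
          rw [norm_div, div_le_iff₀ hdpos]
          calc ‖φ u - φ τ‖ ≤ M * |u - τ| := hLip u hu
            _ ≤ M * ‖(τ:ℂ) - Complex.I * γ - u‖ :=
              mul_le_mul_of_nonneg_left (hdennorm γ u) hMnn
      · have hne : ∀ᵐ u ∂(volume.restrict B), u ≠ τ := by
          refine ae_restrict_of_ae ?_
          rw [ae_iff]
          convert Real.volume_singleton (a := τ) using 2
          ext u; simp
        refine hne.mono fun u hu => ?_
        have hune : ((τ:ℂ) - u) ≠ 0 := by
          intro h
          have h0 : |u - τ| = 0 := by rw [← hnormc u, h, norm_zero]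
          exact (abs_pos.2 (sub_ne_zero.2 hu)).ne' h0
        have hcont : Tendsto (fun γ : ℝ => (τ:ℂ) - Complex.I * γ - u)
            (nhdsWithin 0 (Set.Ioi 0)) (nhds ((τ:ℂ) - u)) := by
          have hcont' : Continuous fun γ : ℝ => (τ:ℂ) - Complex.I * γ - u :=
            (continuous_const.sub (continuous_const.mul Complex.continuous_ofReal)).sub
              continuous_const
          have h0 := (hcont'.tendsto 0).mono_left (nhdsWithin_le_nhds (s := Set.Ioi (0:ℝ)))
          simpa using h0
        exact Filter.Tendsto.div tendsto_const_nhds hcont hune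
    -- explicit value of the singular term
    have hc : ∀ γ : ℝ, 0 < γ →
        (∫ u in B, φ τ / ((τ:ℂ) - Complex.I * γ - u))
          = φ τ * (Complex.log (1 - Complex.I * γ) - Complex.log (-1 - Complex.I * γ)) := by
      intro γ hγ
      have hslit : ∀ z : ℂ, z.im = -γ → z ∈ Complex.slitPlane := by
        intro z hz
        rw [Complex.mem_slitPlane_iff]
        right; rw [hz]; exact neg_ne_zero.2 hγ.ne'
      have hder : ∀ u : ℝ, HasDerivAt (fun x : ℝ => -Complex.log ((τ:ℂ) - Complex.I * γ - x))
          (1 / ((τ:ℂ) - Complex.I * γ - u)) u := by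
        intro u
        have h2 : HasDerivAt (fun z : ℂ => (τ:ℂ) - Complex.I * γ - z) (-1) (u:ℂ) :=
          (hasDerivAt_id (u:ℂ)).const_sub ((τ:ℂ) - Complex.I * γ)
        have h3 := (Complex.hasDerivAt_log (hslit _ (hdenim γ u))).comp (u:ℂ) h2
        have h4 := h3.neg
        have h5 : HasDerivAt (fun z : ℂ => -Complex.log ((τ:ℂ) - Complex.I * γ - z))
            (1 / ((τ:ℂ) - Complex.I * γ - u)) (u:ℂ) := by
          exact h4.congr_deriv (by rw [one_div]; ring)
        exact h5.comp_ofReal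
      have hii : IntervalIntegrable (fun u : ℝ => 1 / ((τ:ℂ) - Complex.I * γ - u)) volume
          (τ-1) (τ+1) := by
        refine Continuous.intervalIntegrable ?_ _ _
        exact continuous_const.div (continuous_const.sub Complex.continuous_ofReal) fun u => hdne γ hγ u
      have e1 : (τ:ℂ) - Complex.I * γ - ((τ+1:ℝ):ℂ) = -1 - Complex.I * γ := by push_cast; ring
      have e2 : (τ:ℂ) - Complex.I * γ - ((τ-1:ℝ):ℂ) = 1 - Complex.I * γ := by push_cast; ring
      calc ∫ u in B, φ τ / ((τ:ℂ) - Complex.I * γ - u)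
          = φ τ * ∫ u in B, 1 / ((τ:ℂ) - Complex.I * γ - u) := by
            rw [← integral_const_mul]
            exact setIntegral_congr_fun hBm fun u _ => by rw [mul_one_div]
        _ = φ τ * (Complex.log (1 - Complex.I * γ) - Complex.log (-1 - Complex.I * γ)) := by
            congr 1
            rw [hBdef, integral_Icc_eq_integral_Ioc,
              ← intervalIntegral.integral_of_le (by linarith : τ-1 ≤ τ+1),
              intervalIntegral.integral_eq_sub_of_hasDerivAt (fun u _ => hder u) hii]
            rw [e1, e2]
            ring
    -- limit of the singular term
    have htc : Tendsto (fun γ : ℝ => Complex.log (1 - Complex.I * γ)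
          - Complex.log (-1 - Complex.I * γ))
        (nhdsWithin 0 (Set.Ioi 0)) (nhds ((Real.pi : ℂ) * Complex.I)) := by
      have t1 : Tendsto (fun γ : ℝ => Complex.log (1 - Complex.I * γ))
          (nhdsWithin 0 (Set.Ioi 0)) (nhds 0) := by
        have hc1 : ContinuousAt Complex.log 1 :=
          continuousAt_clog (by rw [Complex.mem_slitPlane_iff]; left; norm_num)
        have hmap : Tendsto (fun γ : ℝ => 1 - Complex.I * γ) (nhdsWithin 0 (Set.Ioi 0))
            (nhds (1:ℂ)) := by
          have hcont' : Continuous fun γ : ℝ => 1 - Complex.I * (γ:ℂ) :=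
            continuous_const.sub (continuous_const.mul Complex.continuous_ofReal)
          have h0 := (hcont'.tendsto 0).mono_left (nhdsWithin_le_nhds (s := Set.Ioi (0:ℝ)))
          simpa using h0
        have := hc1.tendsto.comp hmap
        simpa [Complex.log_one, Function.comp_def] using this
      have t2 : Tendsto (fun γ : ℝ => Complex.log (-1 - Complex.I * γ))
          (nhdsWithin 0 (Set.Ioi 0)) (nhds (-((Real.pi : ℂ) * Complex.I))) := by
        have hmap : Tendsto (fun γ : ℝ => -1 - Complex.I * γ) (nhdsWithin 0 (Set.Ioi 0))
            (nhdsWithin (-1 : ℂ) {z : ℂ | z.im < 0}) := by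
          rw [tendsto_nhdsWithin_iff]
          constructor
          · have hcont' : Continuous fun γ : ℝ => -1 - Complex.I * (γ:ℂ) :=
              continuous_const.sub (continuous_const.mul Complex.continuous_ofReal)
            have h0 := (hcont'.tendsto 0).mono_left (nhdsWithin_le_nhds (s := Set.Ioi (0:ℝ)))
            simpa using h0
          · filter_upwards [self_mem_nhdsWithin] with γ hγ
            show (-1 - Complex.I * (γ:ℂ)).im < 0
            simp only [Complex.sub_im, Complex.neg_im, Complex.one_im, Complex.mul_im,
              Complex.I_re, Complex.I_im, Complex.ofReal_re, Complex.ofReal_im]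
            simpa using hγ
        have hlog := (Complex.tendsto_log_nhdsWithin_im_neg_of_re_neg_of_im_zero
          (by norm_num : (-1 : ℂ).re < 0) (by simp)).comp hmap
        simpa [Function.comp_def] using hlog
      have := t1.sub t2
      simpa using this
    -- assemble
    have key2 : (fun γ : ℝ => ∫ u : ℝ, φ u / ((τ:ℂ) - Complex.I * γ - u))
        =ᶠ[nhdsWithin (0:ℝ) (Set.Ioi 0)]
        fun γ => (∫ u in B, (φ u - φ τ) / ((τ:ℂ) - Complex.I * γ - u))
          + φ τ * (Complex.log (1 - Complex.I * γ) - Complex.log (-1 - Complex.I * γ))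
          + ∫ u in Bᶜ, φ u / ((τ:ℂ) - Complex.I * γ - u) := by
      filter_upwards [self_mem_nhdsWithin] with γ hγ
      have hγ' : (0:ℝ) < γ := hγ
      rw [← integral_add_compl hBm (hintγ γ hγ')]
      congr 1
      have hgγ : IntegrableOn (fun u : ℝ => (φ u - φ τ) / ((τ:ℂ) - Complex.I * γ - u)) B := by
        refine hIobdd _ M B hBm subset_rfl ((hφc.measurable.sub measurable_const).div (hmdenγ γ))
          fun u hu => ?_
        by_cases h : u = τ
        · simp [h, hMnn]
        · have hpos : 0 < |u - τ| := abs_pos.2 (sub_ne_zero.2 h)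
          have hdpos : 0 < ‖(τ:ℂ) - Complex.I * γ - u‖ := lt_of_lt_of_le hpos (hdennorm γ u)
          rw [norm_div, div_le_iff₀ hdpos]
          calc ‖φ u - φ τ‖ ≤ M * |u - τ| := hLip u hu
            _ ≤ M * ‖(τ:ℂ) - Complex.I * γ - u‖ :=
              mul_le_mul_of_nonneg_left (hdennorm γ u) hMnn
      have hcγ : IntegrableOn (fun u : ℝ => φ τ / ((τ:ℂ) - Complex.I * γ - u)) B := by
        refine hIobdd _ (‖φ τ‖ / γ) B hBm subset_rfl (measurable_const.div (hmdenγ γ))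
          fun u hu => ?_
        rw [norm_div]
        refine div_le_div₀ (norm_nonneg _) le_rfl hγ' ?_
        calc γ = |γ| := (abs_of_pos hγ').symm
          _ ≤ _ := hdennorm' γ u
      calc ∫ u in B, φ u / ((τ:ℂ) - Complex.I * γ - u)
          = ∫ u in B, ((φ u - φ τ) / ((τ:ℂ) - Complex.I * γ - u)
            + φ τ / ((τ:ℂ) - Complex.I * γ - u)) := by
            refine setIntegral_congr_fun hBm fun u _ => ?_
            rw [← add_div, sub_add_cancel]
        _ = (∫ u in B, (φ u - φ τ) / ((τ:ℂ) - Complex.I * γ - u))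
            + ∫ u in B, φ τ / ((τ:ℂ) - Complex.I * γ - u) := integral_add hgγ hcγ
        _ = _ := by rw [hc γ hγ']
    have hfinal := (ht3.add (Filter.Tendsto.const_mul (φ τ) htc)).add ht2
    refine Filter.Tendsto.congr' key2.symm ?_
    convert hfinal using 2
    ring
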